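/- arXiv:1507.07144 — 5 statements merged into one kernel-verified Lean document; each statement's English description precedes it below -/
import Mathlib

section
/- Let f : ℝⁿ → ℝ ∪ {∞} be proper and lower semicontinuous. Then f attains a strong minimum at x̄ if and only if its Moreau envelope e₁f attains a strong minimum at x̄. -/
open Filter Topology

/-- The Moreau envelope with parameter 1 of an extended-real-valued function. -/
noncomputable def moreauEnv {n : ℕ} (f : EuclideanSpace ℝ (Fin n) → EReal) :
    EuclideanSpace ℝ (Fin n) → EReal :=
  fun x => ⨅ y, f y + (((1 / 2 : ℝ) * ‖y - x‖ ^ 2 : ℝ) : EReal)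

/-- `f` is proper: nowhere `-∞` and somewhere finite. -/
def ProperFn {n : ℕ} (f : EuclideanSpace ℝ (Fin n) → EReal) : Prop :=
  (∀ x, f x ≠ ⊥) ∧ ∃ x, f x ≠ ⊤

/-- Convexity for extended-real-valued functions. -/
def ConvexFn {n : ℕ} (f : EuclideanSpace ℝ (Fin n) → EReal) : Prop :=
  ∀ x y : EuclideanSpace ℝ (Fin n), ∀ a b : ℝ, 0 ≤ a → 0 ≤ b → a + b = 1 →
    f (a • x + b • y) ≤ (a : EReal) * f x + (b : EReal) * f y

/-- `f` is strongly convex: `f - (σ/2)‖·‖²` is convex for some `σ > 0`. -/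
def StronglyConvexFn {n : ℕ} (f : EuclideanSpace ℝ (Fin n) → EReal) : Prop :=
  ∃ σ : ℝ, 0 < σ ∧ ConvexFn (fun x => f x - ((σ / 2 * ‖x‖ ^ 2 : ℝ) : EReal))

/-- `f` is (super)coercive: `liminf f(x)/‖x‖ = ∞` as `‖x‖ → ∞`, phrased as:
for every slope `c`, eventually (as `‖x‖ → ∞`) `f x ≥ c‖x‖`. -/
def CoerciveFn {n : ℕ} (f : EuclideanSpace ℝ (Fin n) → EReal) : Prop :=
  ∀ c : ℝ, ∀ᶠ x : EuclideanSpace ℝ (Fin n) in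
    Filter.comap (fun x => ‖x‖) Filter.atTop, ((c * ‖x‖ : ℝ) : EReal) ≤ f x

/-- `f` attains a strong minimum at `x̄`: `x̄` is a global minimizer and every
minimizing sequence converges to `x̄`. -/
def StrongMinAt {n : ℕ} (f : EuclideanSpace ℝ (Fin n) → EReal)
    (xbar : EuclideanSpace ℝ (Fin n)) : Prop :=
  (∀ x, f xbar ≤ f x) ∧
    ∀ u : ℕ → EuclideanSpace ℝ (Fin n),
      Tendsto (fun k => f (u k)) atTop (nhds (f xbar)) → Tendsto u atTop (nhds xbar)


section AuxStrongMin

variable {n : ℕ}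

private lemma cnn (y x : EuclideanSpace ℝ (Fin n)) : (0:ℝ) ≤ 1/2 * ‖y - x‖^2 := by positivity

private lemma env_le_self' (f : EuclideanSpace ℝ (Fin n) → EReal) (x : EuclideanSpace ℝ (Fin n)) :
    (⨅ y, f y + (((1 / 2 : ℝ) * ‖y - x‖ ^ 2 : ℝ) : EReal)) ≤ f x := by
  have h := iInf_le (fun y => f y + (((1/2:ℝ) * ‖y - x‖^2 : ℝ):EReal)) x
  simpa using h

private lemma le_term' (f : EuclideanSpace ℝ (Fin n) → EReal) (m : EReal)
    (h : ∀ y, m ≤ f y) (x : EuclideanSpace ℝ (Fin n)) :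
    m ≤ (⨅ y, f y + (((1 / 2 : ℝ) * ‖y - x‖ ^ 2 : ℝ) : EReal)) :=
  le_iInf fun y => le_trans (h y) (le_add_of_nonneg_right (EReal.coe_nonneg.2 (cnn y x)))

private lemma lsc_le' (f : EuclideanSpace ℝ (Fin n) → EReal) (hlsc : LowerSemicontinuous f)
    (xbar : EuclideanSpace ℝ (Fin n)) {y : ℕ → EuclideanSpace ℝ (Fin n)} {L : EReal}
    (hy : Tendsto y atTop (𝓝 xbar)) (hL : Tendsto (fun k => f (y k)) atTop (𝓝 L)) :
    f xbar ≤ L := by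
  by_contra h
  push_neg at h
  obtain ⟨c, hc1, hc2⟩ := exists_between h
  have hev : ∀ᶠ k in atTop, c < f (y k) := hy.eventually (hlsc xbar c hc2)
  exact absurd (ge_of_tendsto hL (hev.mono fun k hk => hk.le)) (not_le.2 hc1)

private lemma squeeze' (a : ℕ → EReal) (m : ℝ) (δ : ℕ → ℝ) (hδ : Tendsto δ atTop (𝓝 0))
    (h1 : ∀ k, (m:EReal) ≤ a k) (h2 : ∀ k, a k ≤ ((m + δ k : ℝ):EReal)) :
    Tendsto a atTop (𝓝 (m:EReal)) := by
  have h3 : Tendsto (fun k => ((m + δ k : ℝ):EReal)) atTop (𝓝 (m:EReal)) :=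
    EReal.tendsto_coe.2 (by simpa using tendsto_const_nhds.add hδ)
  exact tendsto_of_tendsto_of_tendsto_of_le_of_le tendsto_const_nhds h3 h1 h2

private lemma norm_tendsto' (t : ℕ → ℝ) (ht0 : ∀ k, 0 ≤ t k) (δ : ℕ → ℝ)
    (hδ : Tendsto δ atTop (𝓝 0)) (h : ∀ k, t k ^ 2 ≤ δ k) : Tendsto t atTop (𝓝 0) := by
  have hsq : Tendsto (fun k => t k ^ 2) atTop (𝓝 0) :=
    tendsto_of_tendsto_of_tendsto_of_le_of_le tendsto_const_nhds hδ (fun k => sq_nonneg _) h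
  have h2 := (Real.continuous_sqrt.tendsto 0).comp hsq
  rw [Real.sqrt_zero] at h2
  have heq : ((fun x => Real.sqrt x) ∘ fun k => t k ^ 2) = t :=
    funext fun k => Real.sqrt_sq (ht0 k)
  rwa [heq] at h2

end AuxStrongMin

theorem strongMin_iff_moreau_strongMin {n : ℕ}
    (f : EuclideanSpace ℝ (Fin n) → EReal)
    (hproper : ProperFn f) (hlsc : LowerSemicontinuous f)
    (xbar : EuclideanSpace ℝ (Fin n)) :
    StrongMinAt f xbar ↔ StrongMinAt (moreauEnv f) xbar := by
  obtain ⟨hbot, x0, hx0⟩ := hproper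
  have hδ0 : Tendsto (fun k:ℕ => 1/((k:ℝ)+1)) atTop (𝓝 0) := tendsto_one_div_add_atTop_nhds_zero_nat
  have env_def : ∀ x, moreauEnv f x = ⨅ y, f y + (((1 / 2 : ℝ) * ‖y - x‖ ^ 2 : ℝ) : EReal) :=
    fun x => rfl
  have env_le_self : ∀ x, moreauEnv f x ≤ f x := fun x => (env_def x) ▸ env_le_self' f x
  have exists_term_lt : ∀ (x : EuclideanSpace ℝ (Fin n)) (a : EReal), moreauEnv f x < a →
      ∃ y, f y + (((1 / 2 : ℝ) * ‖y - x‖ ^ 2 : ℝ) : EReal) < a := by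
    intro x a h
    rw [env_def] at h
    exact iInf_lt_iff.1 h
  constructor
  · rintro ⟨hmin, hseq⟩
    have hne_top : f xbar ≠ ⊤ := fun h => hx0 (top_le_iff.1 (h ▸ hmin x0))
    obtain ⟨m, hm⟩ : ∃ m : ℝ, f xbar = (m:EReal) :=
      ⟨(f xbar).toReal, (EReal.coe_toReal hne_top (hbot xbar)).symm⟩
    have hlow : ∀ x, (m:EReal) ≤ moreauEnv f x :=
      fun x => (env_def x) ▸ le_term' f _ (fun y => hm ▸ hmin y) x
    have henv_xbar : moreauEnv f xbar = (m:EReal) :=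
      le_antisymm (hm ▸ env_le_self xbar) (hlow xbar)
    refine ⟨fun x => henv_xbar ▸ hlow x, ?_⟩
    intro u hu
    rw [henv_xbar] at hu
    have claim : ∀ ε > (0:ℝ), ∃ δ > (0:ℝ), ∀ x, moreauEnv f x < ((m + δ:ℝ):EReal) → ‖x - xbar‖ < ε := by
      intro ε hε
      by_contra hcon
      push_neg at hcon
      have hsel : ∀ k : ℕ, ∃ x, moreauEnv f x < ((m + 1/((k:ℝ)+1):ℝ):EReal) ∧ ε ≤ ‖x - xbar‖ :=
        fun k => hcon _ (by positivity)
      choose x hx1 hx2 using hsel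
      have hsel2 : ∀ k, ∃ y, f y + (((1/2:ℝ) * ‖y - x k‖^2 : ℝ):EReal) < ((m + 1/((k:ℝ)+1):ℝ):EReal) :=
        fun k => exists_term_lt (x k) _ (hx1 k)
      choose y hy using hsel2
      have hfy_lb : ∀ k, (m:EReal) ≤ f (y k) := fun k => hm ▸ hmin (y k)
      have hfy_ub : ∀ k, f (y k) ≤ ((m + 1/((k:ℝ)+1):ℝ):EReal) := fun k =>
        le_trans (le_add_of_nonneg_right (EReal.coe_nonneg.2 (cnn (y k) (x k)))) (hy k).le
      have hfy : Tendsto (fun k => f (y k)) atTop (𝓝 (m:EReal)) := squeeze' _ m _ hδ0 hfy_lb hfy_ub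
      have hyx : Tendsto y atTop (𝓝 xbar) := hseq y (hm ▸ hfy)
      have hc : ∀ k, ‖y k - x k‖^2 ≤ 2/((k:ℝ)+1) := by
        intro k
        have h1 : ((m:ℝ):EReal) + (((1/2:ℝ) * ‖y k - x k‖^2 : ℝ):EReal) < ((m + 1/((k:ℝ)+1):ℝ):EReal) :=
          lt_of_le_of_lt (add_le_add_left (hfy_lb k) _) (hy k)
        rw [← EReal.coe_add] at h1
        have h2 : m + 1/2 * ‖y k - x k‖^2 < m + 1/((k:ℝ)+1) := EReal.coe_lt_coe_iff.1 h1
        have hk1 : (0:ℝ) < (k:ℝ)+1 := by positivity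
        rw [le_div_iff₀ hk1]
        have h7 : (1/((k:ℝ)+1)) * ((k:ℝ)+1) = 1 := by field_simp
        nlinarith [mul_lt_mul_of_pos_right h2 hk1]
      have hnt : Tendsto (fun k => ‖y k - x k‖) atTop (𝓝 0) := by
        refine norm_tendsto' _ (fun k => norm_nonneg _) (fun k => 2/((k:ℝ)+1)) ?_ hc
        have h3 := hδ0.const_mul (2:ℝ)
        simpa [div_eq_mul_inv, mul_comm, mul_assoc] using h3
      have hxk : Tendsto x atTop (𝓝 xbar) := by
        have h1 : Tendsto (fun k => x k - y k) atTop (𝓝 0) := by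
          rw [tendsto_zero_iff_norm_tendsto_zero]
          simpa [norm_sub_rev] using hnt
        have h2 := h1.add hyx
        simpa using h2
      obtain ⟨N, hN⟩ := (Metric.tendsto_atTop.1 hxk) ε hε
      have h4 := hN N le_rfl
      rw [dist_eq_norm] at h4
      exact absurd h4 (not_lt.2 (hx2 N))
    rw [Metric.tendsto_atTop]
    intro ε hε
    obtain ⟨δ, hδ, hδprop⟩ := claim ε hε
    have hmlt : (m:EReal) < ((m + δ:ℝ):EReal) := EReal.coe_lt_coe_iff.2 (by linarith)
    have hev : ∀ᶠ k in atTop, moreauEnv f (u k) < ((m + δ:ℝ):EReal) :=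
      hu.eventually_lt_const hmlt
    obtain ⟨N, hN⟩ := eventually_atTop.1 hev
    exact ⟨N, fun k hk => by rw [dist_eq_norm]; exact hδprop _ (hN k hk)⟩
  · rintro ⟨hmin, hseq⟩
    have hlowf : ∀ y, moreauEnv f xbar ≤ f y := fun y => le_trans (hmin y) (env_le_self y)
    have hM_top : moreauEnv f xbar ≠ ⊤ := fun h => hx0 (top_le_iff.1 (h ▸ hlowf x0))
    rcases eq_or_ne (moreauEnv f xbar) ⊥ with hMbot | hMne
    · exfalso
      have hsel : ∀ k:ℕ, ∃ y, f y + (((1/2:ℝ) * ‖y - xbar‖^2 : ℝ):EReal) < ((-(k:ℝ)):EReal) := by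
        intro k
        refine exists_term_lt xbar _ ?_
        rw [hMbot]; exact EReal.bot_lt_coe _
      choose y hy using hsel
      have hfyk : ∀ k, f (y k) < ((-(k:ℝ)):EReal) := fun k =>
        lt_of_le_of_lt (le_add_of_nonneg_right (EReal.coe_nonneg.2 (cnn (y k) xbar))) (hy k)
      have henvy : ∀ k, moreauEnv f (y k) < ((-(k:ℝ)):EReal) := fun k =>
        lt_of_le_of_lt (env_le_self (y k)) (hfyk k)
      have htends : Tendsto (fun k => moreauEnv f (y k)) atTop (𝓝 ⊥) := by
        apply EReal.tendsto_nhds_bot_iff_real.2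
        intro c
        filter_upwards [eventually_ge_atTop (⌈-c⌉₊ + 1)] with k hk
        have h1 : -(k:ℝ) < c := by
          have h2 : (-c) ≤ (⌈-c⌉₊:ℝ) := Nat.le_ceil _
          have h3 : ((⌈-c⌉₊ + 1 : ℕ):ℝ) ≤ (k:ℝ) := by exact_mod_cast hk
          push_cast at h3
          linarith
        exact lt_trans (henvy k) (EReal.coe_lt_coe_iff.2 h1)
      have hyx : Tendsto y atTop (𝓝 xbar) := hseq y (by rwa [hMbot])
      obtain ⟨r, hr1, hr2⟩ := EReal.lt_iff_exists_real_btwn.1 (Ne.bot_lt (hbot xbar))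
      have hev := hyx.eventually (hlsc xbar r hr2)
      obtain ⟨N, hN⟩ := eventually_atTop.1 hev
      set K := max N (⌈-r⌉₊ + 1) with hK
      have h1 : (r:EReal) < f (y K) := hN K (le_max_left _ _)
      have h2 : f (y K) < ((-(K:ℝ)):EReal) := hfyk K
      have h3 : (-(K:ℝ)) < r := by
        have h4 : (-r) ≤ (⌈-r⌉₊:ℝ) := Nat.le_ceil _
        have h5 : ((⌈-r⌉₊ + 1 : ℕ):ℝ) ≤ (K:ℝ) := by exact_mod_cast le_max_right N (⌈-r⌉₊ + 1)
        push_cast at h5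
        linarith
      exact absurd (lt_trans (lt_trans h1 h2) (EReal.coe_lt_coe_iff.2 h3)) (lt_irrefl _)
    · obtain ⟨M, hM⟩ : ∃ M:ℝ, moreauEnv f xbar = (M:EReal) :=
        ⟨(moreauEnv f xbar).toReal, (EReal.coe_toReal hM_top hMne).symm⟩
      have hsel : ∀ k:ℕ, ∃ y, f y + (((1/2:ℝ) * ‖y - xbar‖^2 : ℝ):EReal) <
          ((M + 1/((k:ℝ)+1):ℝ):EReal) := by
        intro k
        refine exists_term_lt xbar _ ?_
        rw [hM]
        refine EReal.coe_lt_coe_iff.2 ?_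
        have h8 : (0:ℝ) < 1/((k:ℝ)+1) := by positivity
        linarith
      choose y hy using hsel
      have hfy_lb : ∀ k, (M:EReal) ≤ f (y k) := fun k => hM ▸ hlowf (y k)
      have hfy_ub : ∀ k, f (y k) ≤ ((M + 1/((k:ℝ)+1):ℝ):EReal) := fun k =>
        le_trans (le_add_of_nonneg_right (EReal.coe_nonneg.2 (cnn (y k) xbar))) (hy k).le
      have hfy : Tendsto (fun k => f (y k)) atTop (𝓝 (M:EReal)) := squeeze' _ M _ hδ0 hfy_lb hfy_ub
      have henv_lb : ∀ k, (M:EReal) ≤ moreauEnv f (y k) := fun k => hM ▸ hmin (y k)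
      have henv_ub : ∀ k, moreauEnv f (y k) ≤ ((M + 1/((k:ℝ)+1):ℝ):EReal) := fun k =>
        le_trans (env_le_self (y k)) (hfy_ub k)
      have henvy : Tendsto (fun k => moreauEnv f (y k)) atTop (𝓝 (M:EReal)) :=
        squeeze' _ M _ hδ0 henv_lb henv_ub
      have hyx : Tendsto y atTop (𝓝 xbar) := hseq y (by rwa [hM])
      have hfxbar : f xbar = (M:EReal) :=
        le_antisymm (lsc_le' f hlsc xbar hyx hfy) (hM ▸ hlowf xbar)
      refine ⟨fun x2 => le_trans hfxbar.le (hM ▸ hlowf x2), ?_⟩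
      intro u hu
      rw [hfxbar] at hu
      have henvu : Tendsto (fun k => moreauEnv f (u k)) atTop (𝓝 (M:EReal)) :=
        tendsto_of_tendsto_of_tendsto_of_le_of_le tendsto_const_nhds hu
          (fun k => hM ▸ hmin (u k)) (fun k => env_le_self (u k))
      exact hseq u (by rwa [hM])
end

section
/- Let f : ℝⁿ → ℝ ∪ {∞} be proper, lower semicontinuous, and convex. Then f has a strong minimizer if and only if f has a unique minimizer. -/
open Filter Topology

lemma aux_combo {a b m : ℝ} {p : EReal} (ha : 0 < a) (hb : 0 ≤ b) (hab : a + b = 1)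
    (hmp : (m : EReal) ≤ p) : (a : EReal) * p + (b : EReal) * (m : EReal) ≤ p := by
  induction p with
  | bot => exact absurd hmp (by simp)
  | coe r =>
      rw [← EReal.coe_mul, ← EReal.coe_mul, ← EReal.coe_add, EReal.coe_le_coe_iff]
      have hmr : m ≤ r := by exact_mod_cast hmp
      calc a * r + b * m ≤ a * r + b * r := by nlinarith [mul_le_mul_of_nonneg_left hmr hb]
        _ = (a + b) * r := by ring
        _ = r := by rw [hab, one_mul]
  | top =>
      rw [EReal.mul_top_of_pos (by exact_mod_cast ha), ← EReal.coe_mul, EReal.top_add_coe]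


theorem strong_minimizer_iff_unique_minimizer {n : ℕ}
    (f : EuclideanSpace ℝ (Fin n) → EReal)
    (hproper : ProperFn f) (hlsc : LowerSemicontinuous f) (hconv : ConvexFn f) :
    (∃ xbar, StrongMinAt f xbar) ↔ (∃! xbar, ∀ x, f xbar ≤ f x) := by
  constructor
  · rintro ⟨xbar, hmin, hseq⟩
    refine ⟨xbar, hmin, fun y hy => ?_⟩
    have heq : f y = f xbar := le_antisymm (hy xbar) (hmin y)
    have h := hseq (fun _ => y) (by rw [show (fun k : ℕ => f ((fun _ => y) k)) = fun _ => f xbar from funext fun _ => heq]; exact tendsto_const_nhds)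
    exact tendsto_const_nhds_iff.mp h
  · rintro ⟨xbar, hmin, huniq⟩
    refine ⟨xbar, hmin, fun u hu => ?_⟩
    have huniq' : ∀ y, (∀ x, f y ≤ f x) → y = xbar := huniq
    obtain ⟨x0, hx0⟩ := hproper.2
    have hnetop : f xbar ≠ ⊤ := fun h => hx0 (top_le_iff.mp (h ▸ hmin x0))
    set m : ℝ := (f xbar).toReal with hm'
    have hm : (m : EReal) = f xbar := EReal.coe_toReal hnetop (hproper.1 xbar)
    by_contra hnot
    rw [Metric.tendsto_atTop] at hnot
    push_neg at hnot
    obtain ⟨ε, hε, hfreq⟩ := hnot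
    have hfr : ∃ᶠ k in atTop, ε ≤ dist (u k) xbar := frequently_atTop.2 hfreq
    obtain ⟨φ, hφmono, hφ⟩ := Filter.extraction_of_frequently_atTop hfr
    set t : ℕ → ℝ := fun k => ε / dist (u (φ k)) xbar with ht'
    have hdpos : ∀ k, 0 < dist (u (φ k)) xbar := fun k => lt_of_lt_of_le hε (hφ k)
    have ht0 : ∀ k, 0 < t k := fun k => div_pos hε (hdpos k)
    have ht1 : ∀ k, t k ≤ 1 := fun k => (div_le_one (hdpos k)).2 (hφ k)
    set v : ℕ → EuclideanSpace ℝ (Fin n) :=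
      fun k => t k • u (φ k) + (1 - t k) • xbar with hv'
    have hvd : ∀ k, dist (v k) xbar = ε := by
      intro k
      have h1 : v k - xbar = t k • (u (φ k) - xbar) := by
        simp only [hv', smul_sub]; module
      rw [dist_eq_norm, h1, norm_smul, Real.norm_eq_abs, abs_of_pos (ht0 k),
        ← dist_eq_norm, ht']
      simp only []; rw [div_mul_cancel₀ _ (hdpos k).ne']
    have hfv : ∀ k, f (v k) ≤ f (u (φ k)) := by
      intro k
      calc f (v k) ≤ (t k : EReal) * f (u (φ k)) + ((1 - t k : ℝ) : EReal) * f xbar :=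
            hconv (u (φ k)) xbar (t k) (1 - t k) (ht0 k).le (by linarith [ht1 k]) (by ring)
        _ ≤ f (u (φ k)) := by
            rw [← hm]
            exact aux_combo (ht0 k) (by linarith [ht1 k]) (by ring) (hm ▸ hmin (u (φ k)))
    have hsq : Tendsto (fun k => f (v k)) atTop (nhds (f xbar)) :=
      tendsto_of_tendsto_of_tendsto_of_le_of_le tendsto_const_nhds
        (hu.comp hφmono.tendsto_atTop) (fun k => hmin (v k)) hfv
    have hvmem : ∀ k, v k ∈ Metric.sphere xbar ε := fun k => by
      simpa [Metric.mem_sphere, dist_eq_norm] using hvd k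
    obtain ⟨w, hw, ψ, hψmono, hψtend⟩ :=
      (isCompact_sphere xbar ε).tendsto_subseq hvmem
    have hfw : f w ≤ f xbar := by
      by_contra hc
      push_neg at hc
      obtain ⟨y, hy1, hy2⟩ := exists_between hc
      have h1 : ∀ᶠ j in atTop, y < f (v (ψ j)) := hψtend.eventually (hlsc w y hy2)
      have h2 : Tendsto (fun j => f (v (ψ j))) atTop (nhds (f xbar)) :=
        hsq.comp hψmono.tendsto_atTop
      have h3 : ∀ᶠ j in atTop, f (v (ψ j)) < y := h2.eventually_lt_const hy1
      obtain ⟨j, hj1, hj2⟩ := (h1.and h3).exists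
      exact absurd (hj1.trans hj2) (lt_irrefl y)
    have hwmin : ∀ x, f w ≤ f x := fun x => hfw.trans (hmin x)
    have := huniq' w hwmin
    rw [this] at hw
    simp [Metric.mem_sphere] at hw
    exact absurd hw.symm (ne_of_gt hε)
end

section
/- Suppose f : ℝⁿ → ℝ ∪ {∞} is proper and lower semicontinuous, and for every m ∈ ℕ (m ≥ 1) there exists z_m ∈ ℝⁿ such that f(z_m) < inf_{‖x - z_m‖ ≥ 1/m} f(x). Then the sequence (z_m) is Cauchy, converges to some x̄ ∈ ℝⁿ, and f attains a strong minimum at x̄. -/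
open Filter Topology

theorem strong_min_from_localization {n : ℕ}
    (f : EuclideanSpace ℝ (Fin n) → EReal)
    (hproper : ProperFn f) (hlsc : LowerSemicontinuous f)
    (z : ℕ → EuclideanSpace ℝ (Fin n))
    (hz : ∀ m : ℕ, 1 ≤ m →
      f (z m) < ⨅ x : {x : EuclideanSpace ℝ (Fin n) // 1 / (m : ℝ) ≤ ‖x - z m‖}, f x) :
    CauchySeq z ∧ ∃ xbar, Tendsto z atTop (nhds xbar) ∧ StrongMinAt f xbar := by
  have hkey : ∀ m : ℕ, 1 ≤ m → ∀ x, 1 / (m : ℝ) ≤ ‖x - z m‖ → f (z m) < f x := by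
    intro m hm x hx
    exact (hz m hm).trans_le (iInf_le (fun x : {x : EuclideanSpace ℝ (Fin n) // 1 / (m : ℝ) ≤ ‖x - z m‖} => f x) ⟨x, hx⟩)
  have hclose : ∀ m k : ℕ, 1 ≤ m → m ≤ k → ‖z k - z m‖ < 1 / (m : ℝ) := by
    intro m k hm hmk
    by_contra h
    push_neg at h
    have h1 : f (z m) < f (z k) := hkey m hm (z k) h
    have h2 : f (z k) < f (z m) := by
      apply hkey k (hm.trans hmk) (z m)
      calc (1 : ℝ) / k ≤ 1 / m := by
            apply one_div_le_one_div_of_le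
            · exact_mod_cast hm
            · exact_mod_cast hmk
        _ ≤ ‖z m - z k‖ := by rw [norm_sub_rev]; exact h
    exact lt_asymm h1 h2
  have hcauchy : CauchySeq z := by
    rw [Metric.cauchySeq_iff']
    intro ε hε
    obtain ⟨N, hN⟩ := exists_nat_one_div_lt hε
    refine ⟨N + 1, fun k hk => ?_⟩
    rw [dist_eq_norm]
    exact (hclose (N + 1) k (Nat.le_add_left 1 N) hk).trans_le
      (le_of_lt (by exact_mod_cast hN))
  obtain ⟨xbar, hconv⟩ := cauchySeq_tendsto_of_complete hcauchy
  have hbar : ∀ m : ℕ, 1 ≤ m → dist xbar (z m) ≤ 1 / (m : ℝ) := by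
    intro m hm
    have ht : Tendsto (fun k => dist (z k) (z m)) atTop (nhds (dist xbar (z m))) :=
      (hconv.dist tendsto_const_nhds)
    refine le_of_tendsto ht ?_
    filter_upwards [eventually_ge_atTop m] with k hk
    rw [dist_eq_norm]
    exact (hclose m k hm hk).le
  -- choice of good indices
  have hgood : ∀ ε : ℝ, 0 < ε → ∃ m : ℕ, 1 ≤ m ∧ 1 / (m : ℝ) < ε / 2 := by
    intro ε hε
    obtain ⟨N, hN⟩ := exists_nat_one_div_lt (half_pos hε)
    exact ⟨N + 1, Nat.le_add_left 1 N, by exact_mod_cast hN⟩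
  have hmin : ∀ x, f xbar ≤ f x := by
    intro x
    rcases eq_or_ne x xbar with rfl | hne
    · exact le_rfl
    have hε : 0 < dist x xbar := dist_pos.mpr hne
    obtain ⟨m, hm1, hm2⟩ := hgood _ hε
    have hfar : 1 / (m : ℝ) ≤ ‖x - z m‖ := by
      have htri : dist x xbar ≤ dist x (z m) + dist (z m) xbar := dist_triangle _ _ _
      have h1 : dist (z m) xbar ≤ 1 / m := by rw [dist_comm]; exact hbar m hm1
      have : dist x xbar - 1 / m ≤ dist x (z m) := by linarith
      rw [← dist_eq_norm]
      linarith
    have hfx : f (z m) < f x := hkey m hm1 x hfar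
    refine le_of_forall_lt fun c hc => ?_
    have hev : ∀ᶠ k in atTop, c < f (z k) := hconv.eventually (hlsc xbar c hc)
    -- need f (z m') < f x for some large m'
    obtain ⟨k, hk1, hk2⟩ := hgood _ hε
    -- pick index large enough for both
    obtain ⟨j, hj1, hj2⟩ := (hev.and (eventually_ge_atTop (max m 1))).exists
    have hj1' : 1 ≤ j := le_trans (le_max_right m 1) hj2
    have hjfar : 1 / (j : ℝ) ≤ ‖x - z j‖ := by
      have h1 : dist (z j) xbar ≤ 1 / j := by rw [dist_comm]; exact hbar j hj1'
      have h2 : (1 : ℝ) / j ≤ 1 / m := by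
        apply one_div_le_one_div_of_le
        · exact_mod_cast hm1
        · exact_mod_cast le_trans (le_max_left m 1) hj2
      have htri : dist x xbar ≤ dist x (z j) + dist (z j) xbar := dist_triangle _ _ _
      rw [← dist_eq_norm]
      linarith
    exact hj1.trans (hkey j hj1' x hjfar)
  refine ⟨hcauchy, xbar, hconv, hmin, ?_⟩
  intro u hu
  rw [Metric.tendsto_atTop]
  intro ε hε
  by_contra h
  push_neg at h
  have hfreq : ∃ᶠ k in atTop, ε ≤ dist (u k) xbar := by
    rw [frequently_atTop]
    intro a
    obtain ⟨b, hb1, hb2⟩ := h a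
    exact ⟨b, hb1, hb2⟩
  obtain ⟨m, hm1, hm2⟩ := hgood ε hε
  set c := ⨅ x : {x : EuclideanSpace ℝ (Fin n) // 1 / (m : ℝ) ≤ ‖x - z m‖}, f x with hc
  have hfreq2 : ∃ᶠ k in atTop, f (u k) ∈ Set.Ici c := by
    refine hfreq.mono fun k hk => ?_
    have h1 : dist (z m) xbar ≤ 1 / m := by rw [dist_comm]; exact hbar m hm1
    have htri : dist (u k) xbar ≤ dist (u k) (z m) + dist (z m) xbar := dist_triangle _ _ _
    have hfar : 1 / (m : ℝ) ≤ ‖u k - z m‖ := by rw [← dist_eq_norm]; linarith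
    exact iInf_le (fun x : {x : EuclideanSpace ℝ (Fin n) // 1 / (m : ℝ) ≤ ‖x - z m‖} => f x) ⟨u k, hfar⟩
  have hcl : f xbar ∈ Set.Ici c := isClosed_Ici.mem_of_frequently_of_tendsto hfreq2 hu
  have : c ≤ f (z m) := hcl.trans (hmin (z m))
  exact absurd (hz m hm1) (not_lt.mpr this)
end

section
/- Let f : ℝⁿ → ℝ ∪ {∞} be proper, lower semicontinuous, and convex with Moreau envelope g = e₁f. Suppose that for some x̄ and every k ∈ ℕ there exists x_k ≠ x̄ with f(x_k) < f(x̄) + 1/k, where x̄ minimizes f. Then for h_k := max{f, f(x̄) + 1/k}, we have e₁f ≤ e₁h_k ≤ e₁f + 1/k, and h_k does not have a strong minimizer. -/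
open Filter Topology

lemma iInf_add_const_le {α : Type*} [Nonempty α] (g : α → EReal) (c : ℝ) :
    (⨅ y, (g y + (c : EReal))) ≤ (⨅ y, g y) + (c : EReal) := by
  rw [← EReal.sub_le_iff_le_add (.inl (EReal.coe_ne_bot c)) (.inl (EReal.coe_ne_top c))]
  refine le_iInf fun y => ?_
  rw [EReal.sub_le_iff_le_add (.inl (EReal.coe_ne_bot c)) (.inl (EReal.coe_ne_top c))]
  exact iInf_le _ y

theorem truncation_no_strong_minimizer {n : ℕ}
    (f : EuclideanSpace ℝ (Fin n) → EReal)
    (hproper : ProperFn f) (hlsc : LowerSemicontinuous f) (hconv : ConvexFn f)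
    (xbar : EuclideanSpace ℝ (Fin n)) (hmin : ∀ x, f xbar ≤ f x)
    (x : ℕ → EuclideanSpace ℝ (Fin n))
    (hx : ∀ k : ℕ, 1 ≤ k → x k ≠ xbar ∧ f (x k) < f xbar + ((1 / (k : ℝ) : ℝ) : EReal)) :
    ∀ k : ℕ, 1 ≤ k →
      (∀ u, moreauEnv f u ≤
          moreauEnv (fun w => max (f w) (f xbar + ((1 / (k : ℝ) : ℝ) : EReal))) u) ∧
      (∀ u, moreauEnv (fun w => max (f w) (f xbar + ((1 / (k : ℝ) : ℝ) : EReal))) u ≤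
          moreauEnv f u + ((1 / (k : ℝ) : ℝ) : EReal)) ∧
      ¬ ∃ z, StrongMinAt (fun w => max (f w) (f xbar + ((1 / (k : ℝ) : ℝ) : EReal))) z := by
  intro k hk
  obtain ⟨hne, hlt⟩ := hx k hk
  set c : EReal := f xbar + ((1 / (k : ℝ) : ℝ) : EReal) with hc
  have hk0 : (0 : ℝ) ≤ 1 / (k : ℝ) := by positivity
  have hself : ∀ w, f w ≤ f w + ((1 / (k : ℝ) : ℝ) : EReal) := by
    intro w
    nth_rewrite 1 [← add_zero (f w)]
    exact add_le_add_right (by exact_mod_cast hk0) _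
  have hmaxle : ∀ w, max (f w) c ≤ f w + ((1 / (k : ℝ) : ℝ) : EReal) := by
    intro w
    exact max_le (hself w) (add_le_add_left (hmin w) _)
  have hfx : f xbar ≠ ⊥ := hproper.1 xbar
  have hft : f xbar ≠ ⊤ := by
    obtain ⟨z, hz⟩ := hproper.2
    exact fun h => hz (top_le_iff.mp (h ▸ hmin z))
  have hclt : f xbar < c := by
    lift f xbar to ℝ using ⟨hft, hfx⟩ with r hr
    rw [hc, ← EReal.coe_add, EReal.coe_lt_coe_iff]
    have : (0:ℝ) < 1 / (k:ℝ) := by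
      have : (0:ℝ) < (k:ℝ) := by exact_mod_cast hk
      positivity
    linarith
  refine ⟨?_, ?_, ?_⟩
  · intro u
    exact iInf_mono fun y => add_le_add_left (le_max_left _ _) _
  · intro u
    calc moreauEnv (fun w => max (f w) c) u
        ≤ ⨅ y, (f y + (((1 / 2 : ℝ) * ‖y - u‖ ^ 2 : ℝ) : EReal) + ((1 / (k : ℝ) : ℝ) : EReal)) := by
          refine iInf_mono fun y => ?_
          calc max (f y) c + (((1 / 2 : ℝ) * ‖y - u‖ ^ 2 : ℝ) : EReal)
              ≤ f y + ((1 / (k : ℝ) : ℝ) : EReal) + (((1 / 2 : ℝ) * ‖y - u‖ ^ 2 : ℝ) : EReal) :=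
                add_le_add_left (hmaxle y) _
            _ = f y + (((1 / 2 : ℝ) * ‖y - u‖ ^ 2 : ℝ) : EReal) + ((1 / (k : ℝ) : ℝ) : EReal) := by
                rw [add_assoc, add_assoc, add_comm ((1 / (k : ℝ) : ℝ) : EReal)]
      _ ≤ moreauEnv f u + ((1 / (k : ℝ) : ℝ) : EReal) :=
          iInf_add_const_le (fun y => f y + (((1 / 2 : ℝ) * ‖y - u‖ ^ 2 : ℝ) : EReal)) _
  · rintro ⟨z, hz1, hz2⟩
    have hge : ∀ w, c ≤ max (f w) c := fun w => le_max_right _ _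
    have hxbar : max (f xbar) c = c := max_eq_right hclt.le
    have hxk : max (f (x k)) c = c := max_eq_right hlt.le
    have hzc : max (f z) c = c := by
      have := hz1 xbar
      simp only at this
      rw [hxbar] at this
      exact le_antisymm this (hge z)
    have key : ∀ w, max (f w) c = c →
        Tendsto (fun _ : ℕ => w) atTop (nhds z) := by
      intro w hw
      apply hz2 (fun _ => w)
      simp only [hw, hzc]
      exact tendsto_const_nhds
    have h1 : z = xbar := tendsto_nhds_unique (key xbar hxbar) tendsto_const_nhds
    have h2 : z = x k := tendsto_nhds_unique (key (x k) hxk) tendsto_const_nhds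
    exact hne (h2 ▸ h1)
end

section
/- Let f, g : ℝⁿ → ℝ ∪ {∞} be proper, lower semicontinuous, and convex. If e₁f = e₁g (the Moreau envelopes with parameter 1 agree everywhere), then f = g. -/
open Filter Topology

section MoreauInjectiveAux
variable {n : ℕ}

local notation "E" => EuclideanSpace ℝ (Fin n)

private lemma ereal_iInf_add {ι : Sort*} (h : ι → EReal) (c : ℝ) :
    (⨅ i, h i) + (c : EReal) = ⨅ i, (h i + c) := by
  refine le_antisymm (le_iInf fun i => add_le_add_left (iInf_le _ i) _) ?_
  have h1 : (⨅ i, (h i + (c : EReal))) - c ≤ ⨅ i, h i := by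
    refine le_iInf fun i => ?_
    rw [EReal.sub_le_iff_le_add (by simp) (by simp)]
    exact iInf_le _ i
  calc (⨅ i, (h i + (c : EReal))) = (⨅ i, (h i + (c : EReal))) - c + c := by
        rw [EReal.sub_add_cancel]
    _ ≤ (⨅ i, h i) + c := add_le_add_left h1 _

private lemma ereal_add_right_cancel {a b : EReal} (c : ℝ) (h : a + (c : EReal) = b + c) :
    a = b := by
  have := congrArg (fun x => x - (c : EReal)) h
  simpa [EReal.add_sub_cancel_right] using this

private lemma qconv (x y : E) {a b : ℝ} (ha : 0 ≤ a) (hb : 0 ≤ b) (hab : a + b = 1) :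
    (1 / 2 : ℝ) * ‖a • x + b • y‖ ^ 2 ≤ a * ((1 / 2) * ‖x‖ ^ 2) + b * ((1 / 2) * ‖y‖ ^ 2) := by
  have h1 : ‖a • x + b • y‖ ^ 2
      = (a * ‖x‖) ^ 2 + 2 * (a * (b * (inner ℝ x y : ℝ))) + (b * ‖y‖) ^ 2 := by
    rw [norm_add_sq_real, real_inner_smul_left, real_inner_smul_right, norm_smul, norm_smul]
    simp [Real.norm_eq_abs, abs_of_nonneg ha, abs_of_nonneg hb]
  have h2 : (inner ℝ x y : ℝ) ≤ ‖x‖ * ‖y‖ := real_inner_le_norm x y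
  nlinarith [mul_nonneg (mul_nonneg ha hb) (sq_nonneg (‖x‖ - ‖y‖)),
    mul_le_mul_of_nonneg_left h2 (mul_nonneg ha hb), norm_nonneg x, norm_nonneg y]

private lemma moreau_sep (F : E → EReal) (hp : ProperFn F) (hlsc : LowerSemicontinuous F)
    (hc : ConvexFn F) {y : E} {r : ℝ} (hr : (r : EReal) < F y) :
    ∃ (ψ : E →L[ℝ] ℝ) (s u : ℝ), 0 ≤ s ∧ ψ y + r * s < u ∧
      ∀ z : E, ∀ t : ℝ, F z ≤ (t : EReal) → u < ψ z + t * s := by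
  classical
  set epi : Set ((EuclideanSpace ℝ (Fin n)) × ℝ) := {p | F p.1 ≤ (p.2 : EReal)} with hepi
  have hconv : Convex ℝ epi := by
    rintro ⟨z₁, t₁⟩ h1 ⟨z₂, t₂⟩ h2 a b ha hb hab
    simp only [hepi, Set.mem_setOf_eq] at h1 h2
    have key := hc z₁ z₂ a b ha hb hab
    have h1' : (a : EReal) * F z₁ ≤ (a : EReal) * (t₁ : EReal) :=
      mul_le_mul_of_nonneg_left h1 (by exact_mod_cast ha)
    have h2' : (b : EReal) * F z₂ ≤ (b : EReal) * (t₂ : EReal) :=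
      mul_le_mul_of_nonneg_left h2 (by exact_mod_cast hb)
    have : F (a • z₁ + b • z₂) ≤ ((a * t₁ + b * t₂ : ℝ) : EReal) := by
      refine key.trans ?_
      calc (a : EReal) * F z₁ + (b : EReal) * F z₂
          ≤ (a : EReal) * (t₁ : EReal) + (b : EReal) * (t₂ : EReal) := add_le_add h1' h2'
        _ = ((a * t₁ + b * t₂ : ℝ) : EReal) := by norm_cast
    simpa [hepi, Prod.smul_fst, Prod.smul_snd, smul_eq_mul] using this
  have hclosed : IsClosed epi := by
    rw [← isOpen_compl_iff, isOpen_iff_mem_nhds]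
    rintro ⟨z, t⟩ hzt
    simp only [Set.mem_compl_iff, hepi, Set.mem_setOf_eq, not_le] at hzt
    obtain ⟨c, hc1, hc2⟩ := EReal.exists_between_coe_real hzt
    have hA : ∀ᶠ w in 𝓝 z, (c : EReal) < F w := hlsc z c hc2
    have hB : Set.Iio c ∈ 𝓝 t := Iio_mem_nhds (by exact_mod_cast hc1)
    rw [nhds_prod_eq]
    filter_upwards [Filter.prod_mem_prod hA hB] with p hp
    obtain ⟨hp1, hp2⟩ := hp
    simp only [Set.mem_compl_iff, hepi, Set.mem_setOf_eq, not_le]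
    exact lt_trans (by exact_mod_cast hp2) hp1
  have hmem : (y, r) ∉ epi := by
    simp only [hepi, Set.mem_setOf_eq]
    exact not_le.mpr hr
  obtain ⟨φ, u, hu1, hu2⟩ := geometric_hahn_banach_point_closed hconv hclosed hmem
  set ψ := φ.comp (ContinuousLinearMap.inl ℝ (EuclideanSpace ℝ (Fin n)) ℝ) with hψdef
  set s := φ (0, 1) with hsdef
  have hdec : ∀ (z : E) (t : ℝ), φ (z, t) = ψ z + t * s := by
    intro z t
    have hzt : (z, t) = (z, (0 : ℝ)) + t • ((0 : EuclideanSpace ℝ (Fin n)), (1 : ℝ)) := by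
      simp [Prod.ext_iff]
    rw [hzt, map_add, map_smul, smul_eq_mul]
    rfl
  obtain ⟨hbot, y₀, hy₀⟩ := hp
  have hFy₀ : F y₀ = ((F y₀).toReal : EReal) := (EReal.coe_toReal hy₀ (hbot y₀)).symm
  have hmem₀ : ∀ t : ℝ, (F y₀).toReal ≤ t → u < ψ y₀ + t * s := by
    intro t ht
    have hmm : (y₀, t) ∈ epi := by
      simp only [hepi, Set.mem_setOf_eq]
      rw [hFy₀]
      exact_mod_cast ht
    have := hu2 _ hmm
    rwa [hdec] at this
  have hs0 : 0 ≤ s := by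
    by_contra hneg
    push_neg at hneg
    have h1 := hmem₀ (max ((F y₀).toReal) ((u - ψ y₀) / s)) (le_max_left _ _)
    have h2 : (max ((F y₀).toReal) ((u - ψ y₀) / s)) * s ≤ u - ψ y₀ :=
      (div_le_iff_of_neg hneg).mp (le_max_right _ _)
    linarith
  refine ⟨ψ, s, u, hs0, ?_, ?_⟩
  · have := hu1
    rwa [hdec] at this
  · intro z t hzt
    have hmm : (z, t) ∈ epi := hzt
    have := hu2 _ hmm
    rwa [hdec] at this

private lemma exists_affine_minorant (F : E → EReal) (hp : ProperFn F)
    (hlsc : LowerSemicontinuous F) (hc : ConvexFn F) {y : E} {r : ℝ}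
    (hr : (r : EReal) < F y) :
    ∃ (α : E →L[ℝ] ℝ) (b : ℝ), (∀ z : E, ((α z + b : ℝ) : EReal) ≤ F z) ∧ r ≤ α y + b := by
  classical
  obtain ⟨hbot, y₀, hy₀⟩ := hp
  -- base nonvertical minorant through a point of the domain
  have hFy₀ : F y₀ = ((F y₀).toReal : EReal) := (EReal.coe_toReal hy₀ (hbot y₀)).symm
  have hr₀ : (((F y₀).toReal - 1 : ℝ) : EReal) < F y₀ := by
    rw [hFy₀]; exact_mod_cast (by linarith : (F y₀).toReal - 1 < (F y₀).toReal)
  obtain ⟨ψ₀, s₀, u₀, hs₀, h₁₀, h₂₀⟩ := moreau_sep F ⟨hbot, y₀, hy₀⟩ hlsc hc hr₀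
  have hs₀pos : 0 < s₀ := by
    rcases lt_or_eq_of_le hs₀ with h | h
    · exact h
    · exfalso
      have ha := h₂₀ y₀ ((F y₀).toReal) (le_of_eq hFy₀)
      rw [← h] at ha h₁₀
      simp only [mul_zero, add_zero] at ha h₁₀
      linarith
  have hbase : ∀ z : E, ((((u₀ - ψ₀ z) / s₀ : ℝ)) : EReal) ≤ F z := by
    intro z
    by_cases hz : F z = ⊤
    · rw [hz]; exact le_top
    · have hFz : F z = ((F z).toReal : EReal) := (EReal.coe_toReal hz (hbot z)).symm
      have := h₂₀ z ((F z).toReal) (le_of_eq hFz)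
      rw [hFz]
      have : (u₀ - ψ₀ z) / s₀ ≤ (F z).toReal := by
        rw [div_le_iff₀ hs₀pos]; linarith
      exact_mod_cast this
  obtain ⟨ψ, s, u, hs, h₁, h₂⟩ := moreau_sep F ⟨hbot, y₀, hy₀⟩ hlsc hc hr
  rcases lt_or_eq_of_le hs with hspos | hszero
  · -- nonvertical separation
    refine ⟨(-(s⁻¹)) • ψ, u / s, ?_, ?_⟩
    · intro z
      by_cases hz : F z = ⊤
      · rw [hz]; exact le_top
      · have hFz : F z = ((F z).toReal : EReal) := (EReal.coe_toReal hz (hbot z)).symm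
        have hlt := h₂ z ((F z).toReal) (le_of_eq hFz)
        rw [hFz]
        have : (-(s⁻¹)) * ψ z + u / s ≤ (F z).toReal := by
          have hfield : (-(s⁻¹)) * ψ z + u / s = (u - ψ z) / s := by field_simp; ring
          rw [hfield, div_le_iff₀ hspos]; linarith
        simpa [ContinuousLinearMap.smul_apply, smul_eq_mul] using (EReal.coe_le_coe_iff.mpr this)
    · have : r ≤ (-(s⁻¹)) * ψ y + u / s := by
        have hfield : (-(s⁻¹)) * ψ y + u / s = (u - ψ y) / s := by field_simp; ring
        rw [hfield, le_div_iff₀ hspos]; linarith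
      simpa [ContinuousLinearMap.smul_apply, smul_eq_mul] using this
  · -- vertical case: y is outside the domain; tilt the base minorant
    rw [← hszero] at h₁ h₂
    simp only [mul_zero, add_zero] at h₁ h₂
    have hψy : ψ y < u := h₁
    set c : ℝ := max 0 ((r - (u₀ - ψ₀ y) / s₀) / (u - ψ y)) with hcdef
    have hc0 : 0 ≤ c := le_max_left _ _
    refine ⟨(-(s₀⁻¹)) • ψ₀ + (-c) • ψ, u₀ / s₀ + c * u, ?_, ?_⟩
    · intro z
      by_cases hz : F z = ⊤
      · rw [hz]; exact le_top
      · have hFz : F z = ((F z).toReal : EReal) := (EReal.coe_toReal hz (hbot z)).symm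
        have hb1 : (u₀ - ψ₀ z) / s₀ ≤ (F z).toReal := by
          have := hbase z
          rw [hFz] at this
          exact_mod_cast this
        have hb2 : u < ψ z := h₂ z ((F z).toReal) (le_of_eq hFz)
        have : (-(s₀⁻¹)) * ψ₀ z + (-c) * ψ z + (u₀ / s₀ + c * u) ≤ (F z).toReal := by
          have hfield : (-(s₀⁻¹)) * ψ₀ z + u₀ / s₀ = (u₀ - ψ₀ z) / s₀ := by
            field_simp; ring
          nlinarith [mul_nonneg hc0 (le_of_lt (sub_pos.mpr hb2))]
        rw [hFz]
        simpa [ContinuousLinearMap.add_apply, ContinuousLinearMap.smul_apply, smul_eq_mul]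
          using (EReal.coe_le_coe_iff.mpr this)
    · have hd : 0 < u - ψ y := by linarith
      have hcge : (r - (u₀ - ψ₀ y) / s₀) / (u - ψ y) ≤ c := le_max_right _ _
      have hmul : r - (u₀ - ψ₀ y) / s₀ ≤ c * (u - ψ y) := by
        rw [div_le_iff₀ hd] at hcge; linarith
      have hfield : (-(s₀⁻¹)) * ψ₀ y + u₀ / s₀ = (u₀ - ψ₀ y) / s₀ := by field_simp; ring
      have : r ≤ (-(s₀⁻¹)) * ψ₀ y + (-c) * ψ y + (u₀ / s₀ + c * u) := by nlinarith
      simpa [ContinuousLinearMap.add_apply, ContinuousLinearMap.smul_apply, smul_eq_mul] using this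

/-- The "tilted infimum" functional determined by the Moreau envelope. -/
private noncomputable def psiAux (F : E → EReal) (x : E) : EReal :=
  ⨅ z, (F z + ((-(inner ℝ x z : ℝ) : ℝ) : EReal))

private lemma le_of_psi_le (F G : E → EReal) (hFp : ProperFn F)
    (hFl : LowerSemicontinuous F) (hFc : ConvexFn F)
    (hpsi : ∀ x : E, psiAux F x ≤ psiAux G x) : ∀ y, F y ≤ G y := by
  intro y
  by_contra hlt
  push_neg at hlt
  obtain ⟨r, hr1, hr2⟩ := EReal.exists_between_coe_real hlt
  obtain ⟨α, b, hmin, hry⟩ := exists_affine_minorant F hFp hFl hFc hr2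
  set v : EuclideanSpace ℝ (Fin n) := (InnerProductSpace.toDual ℝ _).symm α with hv
  have hvz : ∀ z : E, (inner ℝ v z : ℝ) = α z := fun z => InnerProductSpace.toDual_symm_apply
  have hFb : (b : EReal) ≤ psiAux F v := by
    refine le_iInf fun z => ?_
    have h1 := hmin z
    calc (b : EReal) = ((α z + b : ℝ) : EReal) + ((-(inner ℝ v z : ℝ) : ℝ) : EReal) := by
          rw [hvz]; norm_cast; ring
      _ ≤ F z + ((-(inner ℝ v z : ℝ) : ℝ) : EReal) := add_le_add_left h1 _
  have hGb : psiAux G v < (b : EReal) := by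
    refine lt_of_le_of_lt (iInf_le _ y) ?_
    have h2 : G y + ((-(inner ℝ v y : ℝ) : ℝ) : EReal)
        < (r : EReal) + ((-(inner ℝ v y : ℝ) : ℝ) : EReal) :=
      EReal.add_lt_add_right_coe hr1 _
    refine h2.trans_le ?_
    rw [hvz]
    exact_mod_cast (by linarith : r + -(α y) ≤ b)
  exact absurd (hpsi v) (not_le.mpr (lt_of_lt_of_le hGb hFb))

/-- Adding the quadratic `½‖·‖²` preserves properness. -/
private lemma proper_addq (f : E → EReal) (hp : ProperFn f) :
    ProperFn (fun z => f z + (((1 / 2 : ℝ) * ‖z‖ ^ 2 : ℝ) : EReal)) := by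
  obtain ⟨hbot, x₀, hx₀⟩ := hp
  constructor
  · intro x
    have h1 := hbot x
    show f x + _ ≠ ⊥
    by_cases ht : f x = ⊤
    · rw [ht, EReal.top_add_coe]; simp
    · obtain ⟨t, htt⟩ : ∃ t : ℝ, f x = (t : EReal) :=
        ⟨(f x).toReal, (EReal.coe_toReal ht h1).symm⟩
      rw [htt]
      exact_mod_cast EReal.coe_ne_bot _
  · refine ⟨x₀, ?_⟩
    show f x₀ + _ ≠ ⊤
    obtain ⟨t, htt⟩ : ∃ t : ℝ, f x₀ = (t : EReal) :=
      ⟨(f x₀).toReal, (EReal.coe_toReal hx₀ (hbot x₀)).symm⟩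
    rw [htt]
    exact_mod_cast EReal.coe_ne_top _
/-- Adding the quadratic preserves lower semicontinuity. -/
private lemma lsc_addq (f : E → EReal) (_hbot : ∀ x : E, f x ≠ ⊥) (hlsc : LowerSemicontinuous f) :
    LowerSemicontinuous (fun z => f z + (((1 / 2 : ℝ) * ‖z‖ ^ 2 : ℝ) : EReal)) := by
  have hq : LowerSemicontinuous (fun z : E => (((1 / 2 : ℝ) * ‖z‖ ^ 2 : ℝ) : EReal)) := by
    apply Continuous.lowerSemicontinuous
    exact (continuous_coe_real_ereal).comp (by continuity)
  refine hlsc.add' hq fun x => ?_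
  exact EReal.continuousAt_add (Or.inr (EReal.coe_ne_bot _)) (Or.inr (EReal.coe_ne_top _))

/-- Adding the quadratic preserves convexity. -/
private lemma convex_addq (f : E → EReal) (hbot : ∀ x : E, f x ≠ ⊥) (hc : ConvexFn f) :
    ConvexFn (fun z => f z + (((1 / 2 : ℝ) * ‖z‖ ^ 2 : ℝ) : EReal)) := by
  intro x y a b ha hb hab
  rcases eq_or_lt_of_le ha with ha0 | hapos
  · have hb1 : b = 1 := by linarith
    subst hb1
    rw [← ha0]
    simp
  rcases eq_or_lt_of_le hb with hb0 | hbpos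
  · have ha1 : a = 1 := by linarith
    subst ha1
    rw [← hb0]
    simp
  by_cases hx : f x = ⊤
  · have h1 : (a : EReal) * (fun z => f z + (((1 / 2 : ℝ) * ‖z‖ ^ 2 : ℝ) : EReal)) x = ⊤ := by
      simp only [hx, EReal.top_add_coe]
      exact EReal.mul_top_of_pos (by exact_mod_cast hapos)
    have h2 : (b : EReal) * (fun z => f z + (((1 / 2 : ℝ) * ‖z‖ ^ 2 : ℝ) : EReal)) y ≠ ⊥ := by
      simp only
      by_cases hy : f y = ⊤
      · simp only [hy, EReal.top_add_coe]
        rw [EReal.mul_top_of_pos (by exact_mod_cast hbpos)]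
        simp
      · obtain ⟨t, htt⟩ : ∃ t : ℝ, f y = (t : EReal) :=
          ⟨(f y).toReal, (EReal.coe_toReal hy (hbot y)).symm⟩
        rw [htt, ← EReal.coe_add, ← EReal.coe_mul]
        exact_mod_cast EReal.coe_ne_bot _
    rw [h1, EReal.top_add_of_ne_bot h2]
    exact le_top
  by_cases hy : f y = ⊤
  · have h1 : (b : EReal) * (fun z => f z + (((1 / 2 : ℝ) * ‖z‖ ^ 2 : ℝ) : EReal)) y = ⊤ := by
      simp only [hy, EReal.top_add_coe]
      exact EReal.mul_top_of_pos (by exact_mod_cast hbpos)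
    have h2 : (a : EReal) * (fun z => f z + (((1 / 2 : ℝ) * ‖z‖ ^ 2 : ℝ) : EReal)) x ≠ ⊥ := by
      simp only
      obtain ⟨t, htt⟩ : ∃ t : ℝ, f x = (t : EReal) :=
        ⟨(f x).toReal, (EReal.coe_toReal hx (hbot x)).symm⟩
      rw [htt, ← EReal.coe_add, ← EReal.coe_mul]
      exact_mod_cast EReal.coe_ne_bot _
    rw [h1, EReal.add_top_of_ne_bot h2]
    exact le_top
  -- both finite
  obtain ⟨u, hu⟩ : ∃ t : ℝ, f x = (t : EReal) :=
    ⟨(f x).toReal, (EReal.coe_toReal hx (hbot x)).symm⟩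
  obtain ⟨v, hv⟩ : ∃ t : ℝ, f y = (t : EReal) :=
    ⟨(f y).toReal, (EReal.coe_toReal hy (hbot y)).symm⟩
  have hkey := hc x y a b ha hb hab
  rw [hu, hv] at hkey
  have hkey' : f (a • x + b • y) ≤ ((a * u + b * v : ℝ) : EReal) := by
    refine hkey.trans_eq ?_
    norm_cast
  simp only
  calc f (a • x + b • y) + (((1 / 2 : ℝ) * ‖a • x + b • y‖ ^ 2 : ℝ) : EReal)
      ≤ ((a * u + b * v : ℝ) : EReal) + (((1 / 2 : ℝ) * ‖a • x + b • y‖ ^ 2 : ℝ) : EReal) :=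
        add_le_add_left hkey' _
    _ = ((a * u + b * v + (1 / 2 : ℝ) * ‖a • x + b • y‖ ^ 2 : ℝ) : EReal) := by norm_cast
    _ ≤ ((a * (u + (1 / 2) * ‖x‖ ^ 2) + b * (v + (1 / 2) * ‖y‖ ^ 2) : ℝ) : EReal) := by
        have := qconv x y ha hb hab
        exact_mod_cast (by linarith : a * u + b * v + (1 / 2 : ℝ) * ‖a • x + b • y‖ ^ 2
          ≤ a * (u + (1 / 2) * ‖x‖ ^ 2) + b * (v + (1 / 2) * ‖y‖ ^ 2))
    _ = (a : EReal) * (f x + (((1 / 2 : ℝ) * ‖x‖ ^ 2 : ℝ) : EReal))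
        + (b : EReal) * (f y + (((1 / 2 : ℝ) * ‖y‖ ^ 2 : ℝ) : EReal)) := by
        rw [hu, hv]
        norm_cast

private lemma env_eq (f : E → EReal) (x : E) :
    moreauEnv f x = psiAux (fun z => f z + (((1 / 2 : ℝ) * ‖z‖ ^ 2 : ℝ) : EReal)) x
      + (((1 / 2 : ℝ) * ‖x‖ ^ 2 : ℝ) : EReal) := by
  unfold moreauEnv psiAux
  rw [ereal_iInf_add]
  refine iInf_congr fun z => ?_
  have hreal : (1 / 2 : ℝ) * ‖z - x‖ ^ 2
      = (1 / 2 : ℝ) * ‖z‖ ^ 2 + (-(inner ℝ x z : ℝ)) + (1 / 2 : ℝ) * ‖x‖ ^ 2 := by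
    rw [norm_sub_sq_real, real_inner_comm]
    ring
  rw [hreal, EReal.coe_add, EReal.coe_add, ← add_assoc, ← add_assoc]

end MoreauInjectiveAux

theorem moreau_injective {n : ℕ}
    (f g : EuclideanSpace ℝ (Fin n) → EReal)
    (hfp : ProperFn f) (hflsc : LowerSemicontinuous f) (hfc : ConvexFn f)
    (hgp : ProperFn g) (hglsc : LowerSemicontinuous g) (hgc : ConvexFn g)
    (h : moreauEnv f = moreauEnv g) :
    f = g := by
  set F : EuclideanSpace ℝ (Fin n) → EReal :=
    fun z => f z + (((1 / 2 : ℝ) * ‖z‖ ^ 2 : ℝ) : EReal) with hF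
  set G : EuclideanSpace ℝ (Fin n) → EReal :=
    fun z => g z + (((1 / 2 : ℝ) * ‖z‖ ^ 2 : ℝ) : EReal) with hG
  have hFp : ProperFn F := proper_addq f hfp
  have hGp : ProperFn G := proper_addq g hgp
  have hFl : LowerSemicontinuous F := lsc_addq f hfp.1 hflsc
  have hGl : LowerSemicontinuous G := lsc_addq g hgp.1 hglsc
  have hFc : ConvexFn F := convex_addq f hfp.1 hfc
  have hGc : ConvexFn G := convex_addq g hgp.1 hgc
  have hpsi : ∀ x : EuclideanSpace ℝ (Fin n), psiAux F x = psiAux G x := by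
    intro x
    have h1 := env_eq f x
    have h2 := env_eq g x
    rw [h] at h1
    rw [h1] at h2
    rw [hF, hG]
    exact ereal_add_right_cancel ((1 / 2 : ℝ) * ‖x‖ ^ 2) h2
  have hFG : ∀ y, F y = G y := fun y =>
    le_antisymm (le_of_psi_le F G hFp hFl hFc (fun x => le_of_eq (hpsi x)) y)
      (le_of_psi_le G F hGp hGl hGc (fun x => le_of_eq (hpsi x).symm) y)
  funext y
  exact ereal_add_right_cancel ((1 / 2 : ℝ) * ‖y‖ ^ 2) (hFG y)
end
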